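/- arXiv:1206.1757 — 10 statements merged into one kernel-verified Lean document; each statement's English description precedes it below -/
import Mathlib

section
/- The angular momentum 𝛍 = 𝐪×𝐯 is an integral of motion: along any solution (q(t),v(t)) of the Kepler equations on S³ lying in TS³ with −1 < q0(t) < 1, the ℝ³-valued function t ↦ 𝐪(t)×𝐯(t) is constant. -/
open Matrix Real

noncomputable section

/-- The spatial (last three) components of a vector in `ℝ⁴`. -/
def sp (q : Fin 4 → ℝ) : Fin 3 → ℝ := fun i => q i.succ

/-- The Euclidean norm on `ℝ³`, written via the dot product. -/
def nrm3 (x : Fin 3 → ℝ) : ℝ := Real.sqrt (x ⬝ᵥ x)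

/-- The first standard basis vector `e₀ = (1,0,0,0)` of `ℝ⁴`. -/
def e0 : Fin 4 → ℝ := fun i => if i = 0 then 1 else 0

/-- The (constraint set defining the) tangent bundle `TS³ ⊂ ℝ⁴ × ℝ⁴`. -/
def TS3 : Set ((Fin 4 → ℝ) × (Fin 4 → ℝ)) :=
  {p | p.1 ⬝ᵥ p.1 = 1 ∧ p.1 ⬝ᵥ p.2 = 0}

/-- Right hand side of the Kepler equations of motion on `S³`:
`v̇ = γ e₀/(1-q₀²)^{3/2} - (⟨v,v⟩ + γ q₀/(1-q₀²)^{3/2}) q`. -/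
def keplerRHS (γ : ℝ) (q v : Fin 4 → ℝ) : Fin 4 → ℝ :=
  (γ / (1 - q 0 ^ 2) ^ ((3 : ℝ) / 2)) • e0
    - (v ⬝ᵥ v + γ * q 0 / (1 - q 0 ^ 2) ^ ((3 : ℝ) / 2)) • q

/-- The Kepler Hamiltonian on `S³`: `H = ½⟨v,v⟩ - γ q₀ / (1-q₀²)^{1/2}`. -/
def Hham (γ : ℝ) (p : (Fin 4 → ℝ) × (Fin 4 → ℝ)) : ℝ :=
  (1 / 2) * (p.2 ⬝ᵥ p.2) - γ * p.1 0 / Real.sqrt (1 - p.1 0 ^ 2)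

/-- The angular momentum `𝛍 = 𝐪 × 𝐯`. -/
def mu (p : (Fin 4 → ℝ) × (Fin 4 → ℝ)) : Fin 3 → ℝ :=
  crossProduct (sp p.1) (sp p.2)

/-- The vector `𝛑 = q₀ 𝐯 - v₀ 𝐪`. -/
def pivec (p : (Fin 4 → ℝ) × (Fin 4 → ℝ)) : Fin 3 → ℝ :=
  p.1 0 • sp p.2 - p.2 0 • sp p.1

/-- The Runge–Lenz vector `𝐀 = 𝛑 × 𝛍 - γ 𝐪/|𝐪|`. -/
def rl (γ : ℝ) (p : (Fin 4 → ℝ) × (Fin 4 → ℝ)) : Fin 3 → ℝ :=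
  crossProduct (pivec p) (mu p) - (γ / nrm3 (sp p.1)) • sp p.1

/-- The energy-like integral `E = H - |𝛍|²/2`. -/
def Een (γ : ℝ) (p : (Fin 4 → ℝ) × (Fin 4 → ℝ)) : ℝ :=
  Hham γ p - (mu p ⬝ᵥ mu p) / 2

/-- `ν = γ / √(-2E)`. -/
def nuLS (γ : ℝ) (p : (Fin 4 → ℝ) × (Fin 4 → ℝ)) : ℝ :=
  γ / Real.sqrt (-2 * Een γ p)


theorem angular_momentum_is_integral_of_motion (γ : ℝ) (hγ : 0 < γ) (I : Set ℝ) (hI : Convex ℝ I)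
    (q v : ℝ → Fin 4 → ℝ)
    (hq : ∀ t ∈ I, HasDerivAt q (v t) t)
    (hv : ∀ t ∈ I, HasDerivAt v (keplerRHS γ (q t) (v t)) t)
    (hTS : ∀ t ∈ I, (q t, v t) ∈ TS3)
    (hq0 : ∀ t ∈ I, -1 < q t 0 ∧ q t 0 < 1) :
    ∀ t ∈ I, ∀ s ∈ I, mu (q t, v t) = mu (q s, v s) := by
  have key : ∀ r ∈ I, HasDerivWithinAt (fun u => mu (q u, v u)) 0 I r := by
    intro r hr
    have hqc : ∀ j, HasDerivAt (fun u => q u j) (v r j) r :=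
      fun j => (hasDerivAt_pi.mp (hq r hr)) j
    have hvc : ∀ j, HasDerivAt (fun u => v u j) (keplerRHS γ (q r) (v r) j) r :=
      fun j => (hasDerivAt_pi.mp (hv r hr)) j
    set c := v r ⬝ᵥ v r + γ * q r 0 / (1 - q r 0 ^ 2) ^ ((3:ℝ)/2) with hc
    have hrhs : ∀ j : Fin 4, j ≠ 0 → keplerRHS γ (q r) (v r) j = -c * q r j := by
      intro j hj
      simp only [keplerRHS, Pi.sub_apply, Pi.smul_apply, e0, smul_eq_mul, if_neg hj, ← hc]
      ring
    have pair : ∀ a b : Fin 4, a ≠ 0 → b ≠ 0 →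
        HasDerivAt (fun u => q u a * v u b - q u b * v u a) 0 r := by
      intro a b ha hb
      have h : HasDerivAt (fun u => q u a * v u b - q u b * v u a) _ r :=
        ((hqc a).mul (hvc b)).sub ((hqc b).mul (hvc a))
      convert h using 1
      rw [hrhs a ha, hrhs b hb]; ring
    have comp : ∀ i : Fin 3, HasDerivAt (fun u => mu (q u, v u) i) 0 r := by
      intro i
      fin_cases i
      · have := pair 2 3 (by decide) (by decide)
        convert this using 2
        rfl
      · have := pair 3 1 (by decide) (by decide)
        convert this using 2
        rfl
      · have := pair 1 2 (by decide) (by decide)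
        convert this using 2
        rfl
    exact (hasDerivAt_pi.mpr (fun i => by simpa using comp i)).hasDerivWithinAt
  intro t ht s hs
  have hb : ∀ r ∈ I, ‖(0 : Fin 3 → ℝ)‖ ≤ 0 := by simp
  have := hI.norm_image_sub_le_of_norm_hasDerivWithin_le
    (f := fun u => mu (q u, v u)) (f' := fun _ => 0) (fun r hr => key r hr) hb hs ht
  simp only [zero_mul] at this
  have h0 : mu (q t, v t) - mu (q s, v s) = 0 :=
    norm_le_zero_iff.mp this
  exact sub_eq_zero.mp h0

end
end

section
/- The Runge–Lenz vector 𝐀 = 𝛑×𝛍 − γ𝐪/|𝐪| is an integral of motion: along any solution (q(t),v(t)) of the Kepler equations on S³ lying in TS³ with −1 < q0(t) < 1 and 𝐪(t) ≠ 0, the ℝ³-valued function t ↦ 𝐀(q(t),v(t)) is constant. -/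
set_option maxHeartbeats 1000000


open Matrix Real

noncomputable section

lemma succ2 : (Fin.succ 2 : Fin 4) = 3 := rfl

lemma key (γ : ℝ) (q v : ℝ → Fin 4 → ℝ) (t : ℝ)
    (hq : HasDerivAt q (v t) t) (hv : HasDerivAt v (keplerRHS γ (q t) (v t)) t)
    (hQQ : q t ⬝ᵥ q t = 1) (hqnz : sp (q t) ≠ 0) :
    HasDerivAt (fun s => rl γ (q s, v s)) 0 t := by
  have hq' : ∀ j, HasDerivAt (fun s => q s j) (v t j) t := fun j => hasDerivAt_pi.mp hq j
  have hv' : ∀ j, HasDerivAt (fun s => v s j) (keplerRHS γ (q t) (v t) j) t :=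
    fun j => hasDerivAt_pi.mp hv j
  have hK0 : keplerRHS γ (q t) (v t) 0 = γ / (1 - q t 0 ^ 2) ^ ((3:ℝ)/2)
      - (v t ⬝ᵥ v t + γ * q t 0 / (1 - q t 0 ^ 2) ^ ((3:ℝ)/2)) * q t 0 := by
    simp [keplerRHS, e0]
  have hK1 : keplerRHS γ (q t) (v t) 1
      = -((v t ⬝ᵥ v t + γ * q t 0 / (1 - q t 0 ^ 2) ^ ((3:ℝ)/2)) * q t 1) := by
    simp [keplerRHS, e0]
  have hK2 : keplerRHS γ (q t) (v t) 2
      = -((v t ⬝ᵥ v t + γ * q t 0 / (1 - q t 0 ^ 2) ^ ((3:ℝ)/2)) * q t 2) := by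
    simp [keplerRHS, e0]
  have hK3 : keplerRHS γ (q t) (v t) 3
      = -((v t ⬝ᵥ v t + γ * q t 0 / (1 - q t 0 ^ 2) ^ ((3:ℝ)/2)) * q t 3) := by
    simp [keplerRHS, e0]
  have hSpos : 0 < q t 1 * q t 1 + q t 2 * q t 2 + q t 3 * q t 3 := by
    rcases (add_nonneg (add_nonneg (mul_self_nonneg (q t 1)) (mul_self_nonneg (q t 2))) (mul_self_nonneg (q t 3))).lt_or_eq
      with h | h
    · exact h
    · exfalso; apply hqnz; funext i
      have h1 : q t 1 = 0 := by nlinarith [mul_self_nonneg (q t 1), mul_self_nonneg (q t 2), mul_self_nonneg (q t 3)]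
      have h2 : q t 2 = 0 := by nlinarith [mul_self_nonneg (q t 1), mul_self_nonneg (q t 2), mul_self_nonneg (q t 3)]
      have h3 : q t 3 = 0 := by nlinarith [mul_self_nonneg (q t 1), mul_self_nonneg (q t 2), mul_self_nonneg (q t 3)]
      fin_cases i <;> simp [sp, succ2, h1, h2, h3]
  have hS : HasDerivAt (fun s => q s 1 * q s 1 + q s 2 * q s 2 + q s 3 * q s 3)
      (2 * (q t 1 * v t 1 + q t 2 * v t 2 + q t 3 * v t 3)) t := by
    have := (((hq' 1).mul (hq' 1)).add ((hq' 2).mul (hq' 2))).add ((hq' 3).mul (hq' 3))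
    exact this.congr_deriv (by ring)
  have hN := hS.sqrt hSpos.ne'
  set n := Real.sqrt (q t 1 * q t 1 + q t 2 * q t 2 + q t 3 * q t 3) with hndef
  have hn : 0 < n := Real.sqrt_pos.mpr hSpos
  have hn2 : n * n = q t 1 * q t 1 + q t 2 * q t 2 + q t 3 * q t 3 :=
    Real.mul_self_sqrt hSpos.le
  have hρ : (1 - q t 0 ^ 2) ^ ((3:ℝ)/2) = n ^ 3 := by
    have h1 : 1 - q t 0 ^ 2 = q t 1 * q t 1 + q t 2 * q t 2 + q t 3 * q t 3 := by
      have h := hQQ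
      simp [dotProduct, Fin.sum_univ_four] at h
      nlinarith [h]
    rw [h1, ← hn2, show n * n = n ^ (2:ℕ) by ring, ← Real.rpow_natCast n 2,
      ← Real.rpow_natCast n 3, ← Real.rpow_mul hn.le]
    norm_num
  rw [hρ] at hK0 hK1 hK2 hK3
  -- angular-momentum components are conserved
  have hM0 : HasDerivAt (fun s => q s 2 * v s 3 - q s 3 * v s 2) 0 t := by
    have := ((hq' 2).mul (hv' 3)).sub ((hq' 3).mul (hv' 2))
    rw [hK2, hK3] at this; exact this.congr_deriv (by ring)
  have hM1 : HasDerivAt (fun s => q s 3 * v s 1 - q s 1 * v s 3) 0 t := by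
    have := ((hq' 3).mul (hv' 1)).sub ((hq' 1).mul (hv' 3))
    rw [hK1, hK3] at this; exact this.congr_deriv (by ring)
  have hM2 : HasDerivAt (fun s => q s 1 * v s 2 - q s 2 * v s 1) 0 t := by
    have := ((hq' 1).mul (hv' 2)).sub ((hq' 2).mul (hv' 1))
    rw [hK1, hK2] at this; exact this.congr_deriv (by ring)
  -- pivec components
  have hP1 : HasDerivAt (fun s => q s 0 * v s 1 - v s 0 * q s 1) (-(γ / n ^ 3) * q t 1) t := by
    have := ((hq' 0).mul (hv' 1)).sub ((hv' 0).mul (hq' 1))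
    rw [hK0, hK1] at this; exact this.congr_deriv (by ring)
  have hP2 : HasDerivAt (fun s => q s 0 * v s 2 - v s 0 * q s 2) (-(γ / n ^ 3) * q t 2) t := by
    have := ((hq' 0).mul (hv' 2)).sub ((hv' 0).mul (hq' 2))
    rw [hK0, hK2] at this; exact this.congr_deriv (by ring)
  have hP3 : HasDerivAt (fun s => q s 0 * v s 3 - v s 0 * q s 3) (-(γ / n ^ 3) * q t 3) t := by
    have := ((hq' 0).mul (hv' 3)).sub ((hv' 0).mul (hq' 3))
    rw [hK0, hK3] at this; exact this.congr_deriv (by ring)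
  -- gravitational term components
  have hGdiv := (hasDerivAt_const t γ).div hN hn.ne'
  refine hasDerivAt_pi.mpr fun i => ?_
  fin_cases i
  · show HasDerivAt (fun s => rl γ (q s, v s) 0) (0:ℝ) t
    have heq : (fun s => rl γ (q s, v s) 0)
        = fun s => (q s 0 * v s 2 - v s 0 * q s 2) * (q s 1 * v s 2 - q s 2 * v s 1)
          - (q s 0 * v s 3 - v s 0 * q s 3) * (q s 3 * v s 1 - q s 1 * v s 3)
          - γ / Real.sqrt (q s 1 * q s 1 + q s 2 * q s 2 + q s 3 * q s 3) * q s 1 := by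
      funext s
      simp [rl, mu, pivec, sp, nrm3, cross_apply, dotProduct, Fin.sum_univ_three, succ2]
      ring
    rw [heq]
    have := ((hP2.mul hM2).sub (hP3.mul hM1)).sub (hGdiv.mul (hq' 1))
    refine this.congr_deriv ?_
    simp only [Pi.div_apply]
    rw [← hndef]
    field_simp
    linear_combination (-(γ * v t 1)) * hn2
  · show HasDerivAt (fun s => rl γ (q s, v s) 1) (0:ℝ) t
    have heq : (fun s => rl γ (q s, v s) 1)
        = fun s => (q s 0 * v s 3 - v s 0 * q s 3) * (q s 2 * v s 3 - q s 3 * v s 2)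
          - (q s 0 * v s 1 - v s 0 * q s 1) * (q s 1 * v s 2 - q s 2 * v s 1)
          - γ / Real.sqrt (q s 1 * q s 1 + q s 2 * q s 2 + q s 3 * q s 3) * q s 2 := by
      funext s
      simp [rl, mu, pivec, sp, nrm3, cross_apply, dotProduct, Fin.sum_univ_three, succ2]
      ring
    rw [heq]
    have := ((hP3.mul hM0).sub (hP1.mul hM2)).sub (hGdiv.mul (hq' 2))
    refine this.congr_deriv ?_
    simp only [Pi.div_apply]
    rw [← hndef]
    field_simp
    linear_combination (-(γ * v t 2)) * hn2
  · show HasDerivAt (fun s => rl γ (q s, v s) 2) (0:ℝ) t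
    have heq : (fun s => rl γ (q s, v s) 2)
        = fun s => (q s 0 * v s 1 - v s 0 * q s 1) * (q s 3 * v s 1 - q s 1 * v s 3)
          - (q s 0 * v s 2 - v s 0 * q s 2) * (q s 2 * v s 3 - q s 3 * v s 2)
          - γ / Real.sqrt (q s 1 * q s 1 + q s 2 * q s 2 + q s 3 * q s 3) * q s 3 := by
      funext s
      simp [rl, mu, pivec, sp, nrm3, cross_apply, dotProduct, Fin.sum_univ_three, succ2]
      ring
    rw [heq]
    have := ((hP1.mul hM1).sub (hP2.mul hM0)).sub (hGdiv.mul (hq' 3))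
    refine this.congr_deriv ?_
    simp only [Pi.div_apply]
    rw [← hndef]
    field_simp
    linear_combination (-(γ * v t 3)) * hn2

theorem runge_lenz_is_integral_of_motion (γ : ℝ) (hγ : 0 < γ) (I : Set ℝ) (hI : Convex ℝ I)
    (q v : ℝ → Fin 4 → ℝ)
    (hq : ∀ t ∈ I, HasDerivAt q (v t) t)
    (hv : ∀ t ∈ I, HasDerivAt v (keplerRHS γ (q t) (v t)) t)
    (hTS : ∀ t ∈ I, (q t, v t) ∈ TS3)
    (hq0 : ∀ t ∈ I, -1 < q t 0 ∧ q t 0 < 1)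
    (hqnz : ∀ t ∈ I, sp (q t) ≠ 0) :
    ∀ t ∈ I, ∀ s ∈ I, rl γ (q t, v t) = rl γ (q s, v s) := by
  have hkey : ∀ x ∈ I, HasDerivAt (fun s => rl γ (q s, v s)) (0 : Fin 3 → ℝ) x := fun x hx =>
    key γ q v x (hq x hx) (hv x hx) (hTS x hx).1 (hqnz x hx)
  intro t ht s hs
  have h := hI.norm_image_sub_le_of_norm_hasDerivWithin_le
    (C := 0) (f' := fun _ => (0 : Fin 3 → ℝ))
    (fun x hx => (hkey x hx).hasDerivWithinAt) (fun x _ => by simp) ht hs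
  rw [zero_mul] at h
  have h0 : rl γ (q s, v s) - rl γ (q t, v t) = 0 := norm_le_zero_iff.mp h
  exact (sub_eq_zero.mp h0).symm

end
end

section
/- The binormal vector 𝐁 = 𝛑 − (γ/(|𝐪||𝛍|²))(𝛍×𝐪) is an integral of motion along any solution of the Kepler equations on S³ lying in TS³ with −1 < q0(t) < 1, 𝐪(t) ≠ 0 and 𝛍 ≠ 0; moreover, at every point of TS³ with 𝐪 ≠ 0 and 𝛍 ≠ 0 one has 𝐀 = 𝐁×𝛍, 𝐀·𝛍 = 0 and 𝐁·𝛍 = 0. -/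
open Matrix Real

noncomputable section

/-- The binormal vector `𝐁 = 𝛑 - (γ/(|𝐪||𝛍|²)) (𝛍 × 𝐪)`. -/
def bnv (γ : ℝ) (p : (Fin 4 → ℝ) × (Fin 4 → ℝ)) : Fin 3 → ℝ :=
  pivec p - (γ / (nrm3 (sp p.1) * (mu p ⬝ᵥ mu p))) • crossProduct (mu p) (sp p.1)

/- ### Auxiliary lemmas -/

lemma key3 (x y : Fin 3 → ℝ) :
    (crossProduct x y ⬝ᵥ crossProduct x y) • x
      = (x ⬝ᵥ y) • crossProduct (crossProduct x y) x
        - (x ⬝ᵥ x) • crossProduct (crossProduct x y) y := by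
  funext i; fin_cases i <;>
    simp [cross_apply, dotProduct, Fin.sum_univ_three] <;> ring

lemma cross_cross3 (a b c : Fin 3 → ℝ) :
    crossProduct (crossProduct a b) c = (a ⬝ᵥ c) • b - (b ⬝ᵥ c) • a := by
  funext i; fin_cases i <;>
    simp [cross_apply, dotProduct, Fin.sum_univ_three] <;> ring

lemma dot_self_cross3 (x y : Fin 3 → ℝ) : x ⬝ᵥ crossProduct x y = 0 := by
  simp [cross_apply, dotProduct, Fin.sum_univ_three]; ring

lemma dot_cross_self3 (x y : Fin 3 → ℝ) : y ⬝ᵥ crossProduct x y = 0 := by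
  simp [cross_apply, dotProduct, Fin.sum_univ_three]; ring

lemma cross_dot_right3 (a b : Fin 3 → ℝ) : crossProduct a b ⬝ᵥ b = 0 := by
  simp [cross_apply, dotProduct, Fin.sum_univ_three]; ring

lemma hasDerivAt_dot3 {f g : ℝ → Fin 3 → ℝ} {f' g' : Fin 3 → ℝ} {t : ℝ}
    (hf : HasDerivAt f f' t) (hg : HasDerivAt g g' t) :
    HasDerivAt (fun s => f s ⬝ᵥ g s) (f' ⬝ᵥ g t + f t ⬝ᵥ g') t := by
  have h1 := hasDerivAt_pi.1 hf; have h2 := hasDerivAt_pi.1 hg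
  have H := (((h1 0).mul (h2 0)).add ((h1 1).mul (h2 1))).add ((h1 2).mul (h2 2))
  simp only [dotProduct, Fin.sum_univ_three]
  exact H.congr_deriv (by ring)

lemma hasDerivAt_cross3 {f g : ℝ → Fin 3 → ℝ} {f' g' : Fin 3 → ℝ} {t : ℝ}
    (hf : HasDerivAt f f' t) (hg : HasDerivAt g g' t) :
    HasDerivAt (fun s => crossProduct (f s) (g s))
      (crossProduct f' (g t) + crossProduct (f t) g') t := by
  have h1 := hasDerivAt_pi.1 hf; have h2 := hasDerivAt_pi.1 hg
  apply hasDerivAt_pi.2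
  intro i
  fin_cases i <;> simp only [cross_apply] <;>
    [ (convert ((h1 1).mul (h2 2)).sub ((h1 2).mul (h2 1)) using 1);
      (convert ((h1 2).mul (h2 0)).sub ((h1 0).mul (h2 2)) using 1);
      (convert ((h1 0).mul (h2 1)).sub ((h1 1).mul (h2 0)) using 1)] <;>
  · simp [Matrix.cons_val_zero, Matrix.cons_val_one, Pi.mul_def, Pi.sub_def] <;>
    ring

lemma dot_pos3 {x : Fin 3 → ℝ} (hx : x ≠ 0) : 0 < x ⬝ᵥ x := by
  rcases (dotProduct_self_eq_zero (v := x)).not.2 hx with h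
  have h0 : 0 ≤ x ⬝ᵥ x := Finset.sum_nonneg fun i _ => mul_self_nonneg _
  cases' lt_or_eq_of_le h0 with h1 h1
  · exact h1
  · exact absurd h1.symm h

lemma sp_dot_of_TS3 {q : Fin 4 → ℝ} (h : q ⬝ᵥ q = 1) :
    sp q ⬝ᵥ sp q = 1 - q 0 ^ 2 := by
  simp [dotProduct, Fin.sum_univ_four] at h
  simp [sp, dotProduct, Fin.sum_univ_three, show (2:Fin 3).succ = 3 from rfl]
  linear_combination h

lemma rpow_sq_three_halves {r : ℝ} (hr : 0 ≤ r) :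
    ((r ^ 2 : ℝ)) ^ ((3:ℝ)/2) = r ^ 3 := by
  rw [← Real.rpow_natCast r 2, ← Real.rpow_mul hr, ← Real.rpow_natCast r 3]
  norm_num

/-- The derivative of `𝐁` along a Kepler solution vanishes. -/
lemma bnv_hasDerivAt_zero (γ : ℝ) (q v : ℝ → Fin 4 → ℝ) (t : ℝ)
    (hq : HasDerivAt q (v t) t)
    (hv : HasDerivAt v (keplerRHS γ (q t) (v t)) t)
    (hTS : (q t, v t) ∈ TS3)
    (hsp : sp (q t) ≠ 0)
    (hmu : mu (q t, v t) ≠ 0) :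
    HasDerivAt (fun s => bnv γ (q s, v s)) (0 : Fin 3 → ℝ) t := by
  have hqc : ∀ k, HasDerivAt (fun s => q s k) (v t k) t :=
    fun k => hasDerivAt_pi.1 hq k
  have hvc : ∀ k, HasDerivAt (fun s => v s k) (keplerRHS γ (q t) (v t) k) t :=
    fun k => hasDerivAt_pi.1 hv k
  set lam : ℝ := v t ⬝ᵥ v t + γ * q t 0 / (1 - q t 0 ^ 2) ^ ((3:ℝ)/2) with hlam
  have hX : HasDerivAt (fun s => sp (q s)) (sp (v t)) t :=
    hasDerivAt_pi.2 fun i => hqc i.succ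
  have hYraw : HasDerivAt (fun s => sp (v s)) (sp (keplerRHS γ (q t) (v t))) t :=
    hasDerivAt_pi.2 fun i => hvc i.succ
  have hYval : sp (keplerRHS γ (q t) (v t)) = (-lam) • sp (q t) := by
    funext i
    simp [keplerRHS, sp, e0, Fin.succ_ne_zero, hlam]
    ring
  have hY : HasDerivAt (fun s => sp (v s)) ((-lam) • sp (q t)) t := hYval ▸ hYraw
  -- angular momentum is conserved
  have hmu0 : HasDerivAt (fun s => crossProduct (sp (q s)) (sp (v s)))
      (0 : Fin 3 → ℝ) t := by
    have H := hasDerivAt_cross3 hX hY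
    have hz : crossProduct (sp (v t)) (sp (v t))
        + crossProduct (sp (q t)) ((-lam) • sp (q t)) = 0 := by
      rw [cross_self, LinearMap.map_smul, cross_self]
      simp
    exact hz ▸ H
  have hm0 : HasDerivAt
      (fun s => crossProduct (sp (q s)) (sp (v s)) ⬝ᵥ crossProduct (sp (q s)) (sp (v s)))
      0 t := by
    have := hasDerivAt_dot3 hmu0 hmu0
    simpa using this
  -- the radius
  have hxxpos : 0 < sp (q t) ⬝ᵥ sp (q t) := dot_pos3 hsp
  have hd : HasDerivAt (fun s => sp (q s) ⬝ᵥ sp (q s))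
      (sp (v t) ⬝ᵥ sp (q t) + sp (q t) ⬝ᵥ sp (v t)) t := hasDerivAt_dot3 hX hX
  have hr : HasDerivAt (fun s => Real.sqrt (sp (q s) ⬝ᵥ sp (q s)))
      ((sp (v t) ⬝ᵥ sp (q t) + sp (q t) ⬝ᵥ sp (v t))
        / (2 * Real.sqrt (sp (q t) ⬝ᵥ sp (q t)))) t := hd.sqrt hxxpos.ne'
  set r : ℝ := Real.sqrt (sp (q t) ⬝ᵥ sp (q t)) with hrdef
  have hrpos : 0 < r := Real.sqrt_pos.2 hxxpos
  have hr2 : r ^ 2 = sp (q t) ⬝ᵥ sp (q t) := Real.sq_sqrt hxxpos.le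
  set m : ℝ := crossProduct (sp (q t)) (sp (v t)) ⬝ᵥ crossProduct (sp (q t)) (sp (v t))
    with hmdef
  have hmne : m ≠ 0 := (dot_pos3 hmu).ne'
  have hrmne : r * m ≠ 0 := mul_ne_zero hrpos.ne' hmne
  -- product r * m
  have hg : HasDerivAt
      (fun s => Real.sqrt (sp (q s) ⬝ᵥ sp (q s))
        * (crossProduct (sp (q s)) (sp (v s)) ⬝ᵥ crossProduct (sp (q s)) (sp (v s))))
      ((sp (v t) ⬝ᵥ sp (q t) + sp (q t) ⬝ᵥ sp (v t))
        / (2 * Real.sqrt (sp (q t) ⬝ᵥ sp (q t))) * m + r * 0) t := hr.mul hm0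
  have hc : HasDerivAt
      (fun s => γ / (Real.sqrt (sp (q s) ⬝ᵥ sp (q s))
        * (crossProduct (sp (q s)) (sp (v s)) ⬝ᵥ crossProduct (sp (q s)) (sp (v s)))))
      ((0 * (r * m) - γ * ((sp (v t) ⬝ᵥ sp (q t) + sp (q t) ⬝ᵥ sp (v t))
        / (2 * Real.sqrt (sp (q t) ⬝ᵥ sp (q t))) * m + r * 0)) / (r * m) ^ 2) t :=
    (hasDerivAt_const t γ).div hg hrmne
  have hw : HasDerivAt
      (fun s => crossProduct (crossProduct (sp (q s)) (sp (v s))) (sp (q s)))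
      (crossProduct 0 (sp (q t))
        + crossProduct (crossProduct (sp (q t)) (sp (v t))) (sp (v t))) t :=
    hasDerivAt_cross3 hmu0 hX
  -- pivec
  have h1 := (hqc 0).smul hY
  have h2 := (hvc 0).smul hX
  have hPi := h1.sub h2
  have H := hPi.sub (hc.smul hw)
  -- now show the total derivative vanishes
  have hxx : sp (q t) ⬝ᵥ sp (q t) = 1 - q t 0 ^ 2 := sp_dot_of_TS3 hTS.1
  have hrho : (1 - q t 0 ^ 2) ^ ((3:ℝ)/2) = r ^ 3 := by
    rw [← hxx, ← hr2, rpow_sq_three_halves hrpos.le]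
  have hK0 : keplerRHS γ (q t) (v t) 0 = γ / r ^ 3 - lam * q t 0 := by
    simp [keplerRHS, e0, hrho, hlam]
  have hval : (q t 0 • ((-lam) • sp (q t)) + v t 0 • sp (v t))
      - (v t 0 • sp (v t) + keplerRHS γ (q t) (v t) 0 • sp (q t))
      - ((γ / (r * m)) • (crossProduct 0 (sp (q t))
          + crossProduct (crossProduct (sp (q t)) (sp (v t))) (sp (v t)))
        + ((0 * (r * m) - γ * ((sp (v t) ⬝ᵥ sp (q t) + sp (q t) ⬝ᵥ sp (v t))
            / (2 * Real.sqrt (sp (q t) ⬝ᵥ sp (q t))) * m + r * 0)) / (r * m) ^ 2)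
          • crossProduct (crossProduct (sp (q t)) (sp (v t))) (sp (q t)))
      = (0 : Fin 3 → ℝ) := by
    have hz : crossProduct (0 : Fin 3 → ℝ) (sp (q t)) = 0 := by
      funext i; fin_cases i <;> simp [cross_apply]
    rw [hK0, hz, zero_add]
    funext i
    have keyi := congrFun (key3 (sp (q t)) (sp (v t))) i
    simp only [Pi.smul_apply, Pi.sub_apply, Pi.add_apply, smul_eq_mul,
      Pi.zero_apply] at keyi ⊢
    rw [← hmdef] at keyi
    rw [← hr2] at keyi
    rw [dotProduct_comm (sp (v t)) (sp (q t)), ← hrdef]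
    have expand : q t 0 * (-lam * sp (q t) i) + v t 0 * sp (v t) i
        - (v t 0 * sp (v t) i + (γ / r ^ 3 - lam * q t 0) * sp (q t) i)
        - (γ / (r * m) * crossProduct (crossProduct (sp (q t)) (sp (v t))) (sp (v t)) i
          + (0 * (r * m) - γ * ((sp (q t) ⬝ᵥ sp (v t) + sp (q t) ⬝ᵥ sp (v t))
              / (2 * r) * m + r * 0)) / (r * m) ^ 2
            * crossProduct (crossProduct (sp (q t)) (sp (v t))) (sp (q t)) i)
        = (γ / (r ^ 3 * m)) * ((sp (q t) ⬝ᵥ sp (v t))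
            * crossProduct (crossProduct (sp (q t)) (sp (v t))) (sp (q t)) i
          - r ^ 2 * crossProduct (crossProduct (sp (q t)) (sp (v t))) (sp (v t)) i
          - m * sp (q t) i) := by
      field_simp
      ring
    rw [expand, keyi]
    ring
  exact hval ▸ H

theorem binormal_is_integral_and_identities (γ : ℝ) (hγ : 0 < γ) :
    (∀ (I : Set ℝ), Convex ℝ I → ∀ (q v : ℝ → Fin 4 → ℝ),
      (∀ t ∈ I, HasDerivAt q (v t) t) →
      (∀ t ∈ I, HasDerivAt v (keplerRHS γ (q t) (v t)) t) →
      (∀ t ∈ I, (q t, v t) ∈ TS3) →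
      (∀ t ∈ I, -1 < q t 0 ∧ q t 0 < 1) →
      (∀ t ∈ I, sp (q t) ≠ 0) →
      (∀ t ∈ I, mu (q t, v t) ≠ 0) →
      ∀ t ∈ I, ∀ s ∈ I, bnv γ (q t, v t) = bnv γ (q s, v s)) ∧
    (∀ p ∈ TS3, sp p.1 ≠ 0 → mu p ≠ 0 →
      rl γ p = crossProduct (bnv γ p) (mu p) ∧
      rl γ p ⬝ᵥ mu p = 0 ∧
      bnv γ p ⬝ᵥ mu p = 0) := by
  constructor
  · intro I hI q v hq hv hTS hq0 hsp hmu t ht s hs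
    have key : ∀ u ∈ I, HasFDerivWithinAt (fun s => bnv γ (q s, v s))
        (0 : ℝ →L[ℝ] (Fin 3 → ℝ)) I u := by
      intro u hu
      have h := bnv_hasDerivAt_zero γ q v u (hq u hu) (hv u hu) (hTS u hu)
        (hsp u hu) (hmu u hu)
      have h2 := h.hasFDerivAt.hasFDerivWithinAt (s := I)
      simpa [ContinuousLinearMap.toSpanSingleton_zero] using h2
    have hle := hI.norm_image_sub_le_of_norm_hasFDerivWithin_le (C := 0) key
      (fun u _ => by simp) hs ht
    have : ‖bnv γ (q t, v t) - bnv γ (q s, v s)‖ ≤ 0 := by simpa using hle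
    have := norm_le_zero_iff.1 this
    exact sub_eq_zero.1 this
  · intro p hp hsp hmu
    have hm : mu p ⬝ᵥ mu p ≠ 0 := (dot_pos3 hmu).ne'
    have hA : rl γ p = crossProduct (bnv γ p) (mu p) := by
      rw [bnv, map_sub, LinearMap.sub_apply, LinearMap.map_smul₂]
      rw [show crossProduct (crossProduct (mu p) (sp p.1)) (mu p)
            = (mu p ⬝ᵥ mu p) • sp p.1 by
          rw [cross_cross3]
          rw [show sp p.1 ⬝ᵥ mu p = 0 from dot_self_cross3 (sp p.1) (sp p.2)]
          simp]
      rw [smul_smul, rl]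
      have hr : nrm3 (sp p.1) ≠ 0 := (Real.sqrt_pos.2 (dot_pos3 hsp)).ne'
      congr 1
      rw [div_mul_eq_mul_div, mul_div_mul_right _ _ hm]
    refine ⟨hA, ?_, ?_⟩
    · rw [hA]
      exact cross_dot_right3 _ _
    · rw [bnv, sub_dotProduct, smul_dotProduct]
      rw [show crossProduct (mu p) (sp p.1) ⬝ᵥ mu p = 0 from ?_, pivec,
        sub_dotProduct, smul_dotProduct, smul_dotProduct]
      · rw [show sp p.2 ⬝ᵥ mu p = 0 from dot_cross_self3 (sp p.1) (sp p.2),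
          show sp p.1 ⬝ᵥ mu p = 0 from dot_self_cross3 (sp p.1) (sp p.2)]
        simp
      · rw [dotProduct_comm]
        exact dot_self_cross3 _ _
  
end
end

section
/- At every point (q,v) ∈ TS³ with 𝐪 ≠ 0, one has 𝐪·(𝛑×𝛍) = q0|𝛍|², and consequently the equation of the trajectory 𝐀·𝐪 = q0|𝛍|² − γ|𝐪| holds. -/
open Matrix Real

noncomputable section

theorem trajectory_equation (γ : ℝ) (hγ : 0 < γ)
    (p : (Fin 4 → ℝ) × (Fin 4 → ℝ)) (hp : p ∈ TS3) (hqnz : sp p.1 ≠ 0) :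
    sp p.1 ⬝ᵥ crossProduct (pivec p) (mu p) = p.1 0 * (mu p ⬝ᵥ mu p) ∧
    rl γ p ⬝ᵥ sp p.1 = p.1 0 * (mu p ⬝ᵥ mu p) - γ * nrm3 (sp p.1) := by
  have h1 : sp p.1 ⬝ᵥ crossProduct (pivec p) (mu p) = p.1 0 * (mu p ⬝ᵥ mu p) := by
    simp [sp, mu, pivec, crossProduct, dotProduct, Fin.sum_univ_succ]
    ring
  refine ⟨h1, ?_⟩
  have hxx : sp p.1 ⬝ᵥ sp p.1 ≠ 0 := fun h => hqnz (dotProduct_self_eq_zero.mp h)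
  have hnn : (0:ℝ) ≤ sp p.1 ⬝ᵥ sp p.1 := by
    simp only [dotProduct, Fin.sum_univ_succ, ← sq]
    positivity
  have hn : nrm3 (sp p.1) ≠ 0 := by
    rw [nrm3]
    exact Real.sqrt_ne_zero'.mpr (lt_of_le_of_ne hnn (Ne.symm hxx))
  have hsq : nrm3 (sp p.1) ^ 2 = sp p.1 ⬝ᵥ sp p.1 := Real.sq_sqrt hnn
  have : rl γ p ⬝ᵥ sp p.1
      = crossProduct (pivec p) (mu p) ⬝ᵥ sp p.1 - (γ / nrm3 (sp p.1)) * (sp p.1 ⬝ᵥ sp p.1) := by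
    simp [rl, sub_dotProduct, smul_dotProduct]
  rw [this, dotProduct_comm, h1, ← hsq]
  field_simp

end
end

section
/- At every point (q,v) ∈ TS³ with 𝐪 ≠ 0, the squared length of the Runge–Lenz vector satisfies |𝐀|² = γ² + 2E|𝛍|², where E = H − |𝛍|²/2; equivalently, the eccentricity vector 𝐞 = 𝐀/γ satisfies |𝐞|² = 1 + (2E/γ²)|𝛍|². In particular, if E < 0 then the modified eccentricity vector 𝐞̃ = −ν𝐞, with ν = γ/√(−2E), satisfies 𝛍·𝐞̃ = 0 and |𝛍|² + |𝐞̃|² = ν². -/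
open Matrix Real

noncomputable section

lemma sp0 (q : Fin 4 → ℝ) : sp q 0 = q 1 := rfl
lemma sp1 (q : Fin 4 → ℝ) : sp q 1 = q 2 := rfl
lemma sp2 (q : Fin 4 → ℝ) : sp q 2 = q 3 := rfl

theorem runge_lenz_length_and_eccentricity (γ : ℝ) (hγ : 0 < γ)
    (p : (Fin 4 → ℝ) × (Fin 4 → ℝ)) (hp : p ∈ TS3) (hqnz : sp p.1 ≠ 0) :
    rl γ p ⬝ᵥ rl γ p = γ ^ 2 + 2 * Een γ p * (mu p ⬝ᵥ mu p) ∧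
    (γ⁻¹ • rl γ p) ⬝ᵥ (γ⁻¹ • rl γ p) = 1 + 2 * Een γ p / γ ^ 2 * (mu p ⬝ᵥ mu p) ∧
    (Een γ p < 0 →
      mu p ⬝ᵥ (-(nuLS γ p) • (γ⁻¹ • rl γ p)) = 0 ∧
      (mu p ⬝ᵥ mu p) +
        (-(nuLS γ p) • (γ⁻¹ • rl γ p)) ⬝ᵥ (-(nuLS γ p) • (γ⁻¹ • rl γ p)) = nuLS γ p ^ 2) := by
  obtain ⟨hq1, hqv⟩ := hp
  set Q : Fin 3 → ℝ := sp p.1 with hQdef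
  set V : Fin 3 → ℝ := sp p.2 with hVdef
  set q0 := p.1 0 with hq0def
  set v0 := p.2 0 with hv0def
  set M := mu p ⬝ᵥ mu p with hMdef
  have hγ' : γ ≠ 0 := hγ.ne'
  -- scalar consequences of the constraints
  have hQQ : Q ⬝ᵥ Q = 1 - q0 ^ 2 := by
    simp only [dotProduct, Fin.sum_univ_four, Fin.sum_univ_three, hQdef, sp0, sp1, sp2] at hq1 ⊢
    nlinarith [hq1]
  have hQV : Q ⬝ᵥ V = -(q0 * v0) := by
    simp only [dotProduct, Fin.sum_univ_four, Fin.sum_univ_three, hQdef, hVdef,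
      sp0, sp1, sp2] at hqv ⊢
    linarith [hqv]
  have hVQ : V ⬝ᵥ Q = -(q0 * v0) := by rw [dotProduct_comm]; exact hQV
  have hvv : p.2 ⬝ᵥ p.2 = v0 ^ 2 + V ⬝ᵥ V := by
    simp only [dotProduct, Fin.sum_univ_four, Fin.sum_univ_three, hVdef, sp0, sp1, sp2]
    ring
  have hQQpos : 0 < Q ⬝ᵥ Q := by
    have h0 : Q ⬝ᵥ Q ≠ 0 := fun h => hqnz (by rwa [dotProduct_self_eq_zero] at h)
    have h1 : 0 ≤ Q ⬝ᵥ Q := by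
      simp only [dotProduct]
      exact Finset.sum_nonneg fun i _ => mul_self_nonneg _
    exact lt_of_le_of_ne h1 (Ne.symm h0)
  set s := nrm3 Q with hsdef
  have hspos : 0 < s := Real.sqrt_pos.mpr hQQpos
  have hs2 : s ^ 2 = Q ⬝ᵥ Q := Real.sq_sqrt hQQpos.le
  have hsqrt : Real.sqrt (1 - q0 ^ 2) = s := by rw [← hQQ]; rfl
  -- cross product facts
  have hmu : mu p = crossProduct Q V := rfl
  have hpi : pivec p = q0 • V - v0 • Q := rfl
  have hA : rl γ p = crossProduct (pivec p) (mu p) - (γ / s) • Q := rfl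
  have hpim : pivec p ⬝ᵥ mu p = 0 := by
    rw [hpi, hmu]
    simp only [sub_dotProduct, smul_dotProduct, smul_eq_mul, dot_cross_self, dot_self_cross]
    ring
  have hmupi : mu p ⬝ᵥ pivec p = 0 := by rw [dotProduct_comm]; exact hpim
  have hmuQ : mu p ⬝ᵥ Q = 0 := by
    rw [dotProduct_comm, hmu]; exact dot_self_cross Q V
  have hQmu : Q ⬝ᵥ mu p = 0 := by rw [dotProduct_comm]; exact hmuQ
  have hQpi : crossProduct Q (pivec p) = q0 • mu p := by
    rw [hpi, hmu, map_sub, _root_.map_smul, _root_.map_smul, cross_self, smul_zero, sub_zero]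
  have hcrossQ : crossProduct (pivec p) (mu p) ⬝ᵥ Q = q0 * M := by
    rw [dotProduct_comm, triple_product_permutation, triple_product_permutation, hQpi,
      dotProduct_smul, smul_eq_mul, hMdef]
  have hQcross : Q ⬝ᵥ crossProduct (pivec p) (mu p) = q0 * M := by
    rw [dotProduct_comm]; exact hcrossQ
  have hmucross : mu p ⬝ᵥ crossProduct (pivec p) (mu p) = 0 := dot_cross_self _ _
  have hpipi : pivec p ⬝ᵥ pivec p = q0 ^ 2 * (V ⬝ᵥ V) + v0 ^ 2 + q0 ^ 2 * v0 ^ 2 := by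
    rw [hpi]
    simp only [sub_dotProduct, dotProduct_sub, smul_dotProduct, dotProduct_smul, smul_eq_mul,
      hQV, hVQ, hQQ]
    ring
  have hM : M = (1 - q0 ^ 2) * (V ⬝ᵥ V) - (q0 * v0) ^ 2 := by
    rw [hMdef, hmu, cross_dot_cross, hQQ, hQV, hVQ]
    ring
  have hcross2 : crossProduct (pivec p) (mu p) ⬝ᵥ crossProduct (pivec p) (mu p)
      = (pivec p ⬝ᵥ pivec p) * M := by
    rw [cross_dot_cross, hpim, hmupi, hMdef]
    ring
  have hAA : rl γ p ⬝ᵥ rl γ p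
      = (pivec p ⬝ᵥ pivec p) * M - 2 * (γ / s) * (q0 * M) + (γ / s) ^ 2 * (Q ⬝ᵥ Q) := by
    rw [hA]
    simp only [sub_dotProduct, dotProduct_sub, smul_dotProduct, dotProduct_smul, smul_eq_mul,
      hcross2, hcrossQ, hQcross]
    ring
  have hE : 2 * Een γ p = (v0 ^ 2 + V ⬝ᵥ V) - 2 * γ * q0 / s - M := by
    rw [Een, Hham, hsqrt, hvv, ← hMdef, ← hq0def]
    ring
  have hkey : pivec p ⬝ᵥ pivec p = v0 ^ 2 + V ⬝ᵥ V - M := by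
    rw [hpipi, hM]; ring
  have part1 : rl γ p ⬝ᵥ rl γ p = γ ^ 2 + 2 * Een γ p * M := by
    rw [hAA, hE, hkey, ← hs2]
    field_simp
    ring
  refine ⟨part1, ?_, ?_⟩
  · simp only [smul_dotProduct, dotProduct_smul, smul_eq_mul]
    rw [part1]
    field_simp
  · intro hEneg
    have hEne : Een γ p ≠ 0 := hEneg.ne
    have hν2 : nuLS γ p ^ 2 * (-2 * Een γ p) = γ ^ 2 := by
      rw [nuLS, div_pow, Real.sq_sqrt (by linarith)]
      field_simp
    have hmuA : mu p ⬝ᵥ rl γ p = 0 := by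
      rw [hA]
      simp only [dotProduct_sub, dotProduct_smul, smul_eq_mul, hmucross, hmuQ]
      ring
    constructor
    · simp only [dotProduct_smul, smul_eq_mul, hmuA]
      ring
    · simp only [smul_dotProduct, dotProduct_smul, smul_eq_mul]
      rw [part1]
      field_simp
      linear_combination (-M) * hν2

end
end

section
/- Let (q,v) ∈ TS³ with 𝐪 ≠ 0, q0 > 0 and E < 0, and for any φ ∈ ℝ set (x,y) = (α sinφ + β cosφ, ν(−α cosφ + β sinφ)) with α, β as defined. Then, writing x = (x0,𝐱), y = (y0,𝐲), one has 𝐱×𝐲 = 𝐪×𝐯 = 𝛍 and x0𝐲 − y0𝐱 = (1/√(−2E))(γ𝐪/|𝐪| − 𝛑×(𝐪×𝐯)) = 𝐞̃, i.e. the Ligon–Schaaf map Φ intertwines the so(4) momentum map 𝒥(x,y) = x∧y with the map J(q,v) = (𝛍, 𝐞̃). -/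
open Matrix Real

noncomputable section

/-- The vector `α` of the Ligon–Schaaf map for the Kepler problem on `S³`. -/
def alphaLS (γ : ℝ) (p : (Fin 4 → ℝ) × (Fin 4 → ℝ)) : Fin 4 → ℝ :=
  Fin.cons ((sp p.1 ⬝ᵥ pivec p) / (nuLS γ p * p.1 0))
    ((nrm3 (sp p.1))⁻¹ • sp p.1 - ((sp p.1 ⬝ᵥ pivec p) / (γ * p.1 0)) • pivec p)

/-- The vector `β` of the Ligon–Schaaf map for the Kepler problem on `S³`. -/
def betaLS (γ : ℝ) (p : (Fin 4 → ℝ) × (Fin 4 → ℝ)) : Fin 4 → ℝ :=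
  Fin.cons (nrm3 (sp p.1) / (γ * p.1 0) * (pivec p ⬝ᵥ pivec p) - 1)
    ((nrm3 (sp p.1) / (nuLS γ p * p.1 0)) • pivec p)

/-- The phase `φ = (𝐪·𝛑)/(ν q₀) = α₀` of the Ligon–Schaaf map. -/
def phiLS (γ : ℝ) (p : (Fin 4 → ℝ) × (Fin 4 → ℝ)) : ℝ :=
  (sp p.1 ⬝ᵥ pivec p) / (nuLS γ p * p.1 0)

/-- The Ligon–Schaaf map `Φ` for the Kepler problem on `S³`. -/
def PhiLS (γ : ℝ) (p : (Fin 4 → ℝ) × (Fin 4 → ℝ)) : (Fin 4 → ℝ) × (Fin 4 → ℝ) :=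
  (Real.sin (phiLS γ p) • alphaLS γ p + Real.cos (phiLS γ p) • betaLS γ p,
   nuLS γ p • (-Real.cos (phiLS γ p) • alphaLS γ p + Real.sin (phiLS γ p) • betaLS γ p))

lemma cross_rot (A B : Fin 3 → ℝ) (s c ν : ℝ) (h : s^2 + c^2 = 1) :
    crossProduct (s • A + c • B) (ν • ((-c) • A + s • B)) = ν • crossProduct A B := by
  funext i
  fin_cases i
  · simp [cross_apply]; linear_combination (ν * (A 1 * B 2 - A 2 * B 1)) * h
  · simp [cross_apply]; linear_combination (ν * (A 2 * B 0 - A 0 * B 2)) * h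
  · simp [cross_apply]; linear_combination (ν * (A 0 * B 1 - A 1 * B 0)) * h

lemma rot_pair (a0 b0 : ℝ) (A B : Fin 3 → ℝ) (s c ν : ℝ) (h : s^2 + c^2 = 1) :
    (s * a0 + c * b0) • (ν • ((-c) • A + s • B)) - (ν * ((-c) * a0 + s * b0)) • (s • A + c • B)
      = ν • (a0 • B - b0 • A) := by
  funext i
  fin_cases i
  · simp [Pi.smul_apply, smul_eq_mul]; linear_combination (ν * (a0 * B 0 - b0 * A 0)) * h
  · simp [Pi.smul_apply, smul_eq_mul]; linear_combination (ν * (a0 * B 1 - b0 * A 1)) * h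
  · simp [Pi.smul_apply, smul_eq_mul]; linear_combination (ν * (a0 * B 2 - b0 * A 2)) * h

lemma dot3 (a b : Fin 3 → ℝ) : a ⬝ᵥ b = a 0 * b 0 + a 1 * b 1 + a 2 * b 2 := by
  simp [dotProduct, Fin.sum_univ_three]

lemma dot4 (x y : Fin 4 → ℝ) : x ⬝ᵥ y = x 0 * y 0 + sp x ⬝ᵥ sp y := by
  rw [dot3]
  show _ = _ + (x 1 * y 1 + x 2 * y 2 + x 3 * y 3)
  simp [dotProduct, Fin.sum_univ_four]; ring

lemma lagrange3 (a b : Fin 3 → ℝ) :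
    (crossProduct a b) ⬝ᵥ (crossProduct a b) = (a ⬝ᵥ a) * (b ⬝ᵥ b) - (a ⬝ᵥ b)^2 := by
  simp [cross_apply, dot3]; ring

theorem LS_map_intertwines_momentum_maps (γ : ℝ) (hγ : 0 < γ)
    (p : (Fin 4 → ℝ) × (Fin 4 → ℝ)) (hp : p ∈ TS3) (hqnz : sp p.1 ≠ 0)
    (hq0 : 0 < p.1 0) (hE : Een γ p < 0) (φ : ℝ) :
    crossProduct (sp (Real.sin φ • alphaLS γ p + Real.cos φ • betaLS γ p))
        (sp (nuLS γ p • (-Real.cos φ • alphaLS γ p + Real.sin φ • betaLS γ p))) = mu p ∧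
    (Real.sin φ • alphaLS γ p + Real.cos φ • betaLS γ p) 0 •
        sp (nuLS γ p • (-Real.cos φ • alphaLS γ p + Real.sin φ • betaLS γ p)) -
      (nuLS γ p • (-Real.cos φ • alphaLS γ p + Real.sin φ • betaLS γ p)) 0 •
        sp (Real.sin φ • alphaLS γ p + Real.cos φ • betaLS γ p) =
      (Real.sqrt (-2 * Een γ p))⁻¹ •
        ((γ / nrm3 (sp p.1)) • sp p.1 - crossProduct (pivec p) (crossProduct (sp p.1) (sp p.2))) ∧
    (Real.sqrt (-2 * Een γ p))⁻¹ •
        ((γ / nrm3 (sp p.1)) • sp p.1 - crossProduct (pivec p) (crossProduct (sp p.1) (sp p.2))) =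
      -(nuLS γ p / γ) • rl γ p := by
  obtain ⟨hq1, hqv⟩ := hp
  set Q := sp p.1 with hQd
  set V := sp p.2 with hVd
  set q0 := p.1 0 with hq0d
  set v0 := p.2 0 with hv0d
  have hQQnn : 0 ≤ Q ⬝ᵥ Q := by
    have : Q ⬝ᵥ Q = Q 0 ^ 2 + Q 1 ^ 2 + Q 2 ^ 2 := by rw [dot3]; ring
    rw [this]; positivity
  set r := nrm3 Q with hrd
  have hr2 : r ^ 2 = Q ⬝ᵥ Q := Real.sq_sqrt hQQnn
  have hrpos : 0 < r := by
    rw [hrd, nrm3]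
    refine Real.sqrt_pos.2 (lt_of_le_of_ne hQQnn ?_)
    intro h
    exact hqnz ((dotProduct_self_eq_zero).1 h.symm)
  have h1 : q0 ^ 2 + r ^ 2 = 1 := by
    have := dot4 p.1 p.1
    rw [hq1] at this
    rw [hr2]; rw [← hQd, ← hq0d] at this; linear_combination -this
  have h3 : q0 * v0 + Q ⬝ᵥ V = 0 := by
    have := dot4 p.1 p.2
    rw [hqv] at this
    rw [← hQd, ← hVd, ← hq0d, ← hv0d] at this; linarith
  have hQV : Q ⬝ᵥ V = -(q0 * v0) := by linarith
  have hsq1 : Real.sqrt (1 - q0 ^ 2) = r := by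
    rw [show 1 - q0 ^ 2 = r ^ 2 by linarith, Real.sqrt_sq hrpos.le]
  set w := V ⬝ᵥ V with hwd
  have hmu : mu p ⬝ᵥ mu p = r ^ 2 * w - (q0 * v0) ^ 2 := by
    rw [mu, ← hQd, ← hVd, lagrange3, ← hr2, hQV, ← hwd]; ring
  have hEen : Een γ p = (1 / 2) * (v0 ^ 2 + w) - γ * q0 / r - (r ^ 2 * w - (q0 * v0) ^ 2) / 2 := by
    rw [Een, Hham, hmu, dot4 p.2 p.2, ← hq0d, ← hv0d, ← hVd, ← hwd, hsq1]; ring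
  -- s and nu
  have hEneg : 0 < -2 * Een γ p := by linarith
  set s := Real.sqrt (-2 * Een γ p) with hsd
  have hspos : 0 < s := Real.sqrt_pos.2 hEneg
  have hs2 : s ^ 2 = -2 * Een γ p := Real.sq_sqrt hEneg.le
  set ν := nuLS γ p with hνd
  have hν : ν = γ / s := rfl
  have hνs : ν * s = γ := by rw [hν]; field_simp
  have hνpos : 0 < ν := by rw [hν]; positivity
  have h2 : r * s ^ 2 = -r * (v0 ^ 2 + w) + 2 * γ * q0 + r * (r ^ 2 * w - q0 ^ 2 * v0 ^ 2) := by
    rw [hs2, hEen]; field_simp; ring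
  have C1 : r * s ^ 2 + r * (q0 ^ 2 * w + 2 * q0 ^ 2 * v0 ^ 2 + v0 ^ 2 * r ^ 2) = 2 * γ * q0 := by
    linear_combination h2 + (r * w + r * v0 ^ 2) * h1
  -- pi vector
  have hπ : pivec p = q0 • V - v0 • Q := rfl
  have hQπ : Q ⬝ᵥ pivec p = -v0 := by
    rw [hπ]
    simp only [dotProduct_sub, dotProduct_smul, smul_eq_mul, hQV]
    linear_combination v0 * hr2 - v0 * h1
  have hPi2 : pivec p ⬝ᵥ pivec p = q0 ^ 2 * w + 2 * q0 ^ 2 * v0 ^ 2 + v0 ^ 2 * r ^ 2 := by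
    rw [hπ]
    simp only [dotProduct_sub, sub_dotProduct, dotProduct_smul, smul_dotProduct, smul_eq_mul,
      hQV, ← hwd, dotProduct_comm V Q]
    linear_combination -(v0 ^ 2) * hr2
  have hQxπ : crossProduct Q (pivec p) = q0 • crossProduct Q V := by
    rw [hπ, map_sub, _root_.map_smul, _root_.map_smul, cross_self, smul_zero, sub_zero]
  -- component versions
  have hQVc : Q 0 * V 0 + Q 1 * V 1 + Q 2 * V 2 = -(q0 * v0) := by rw [← dot3]; exact hQV
  have hQQc : Q 0 * Q 0 + Q 1 * Q 1 + Q 2 * Q 2 = 1 - q0 ^ 2 := by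
    rw [← dot3, ← hr2]; linarith
  have hwc : V 0 * V 0 + V 1 * V 1 + V 2 * V 2 = w := by rw [← dot3]
  have hπx : crossProduct (pivec p) (crossProduct Q V) = (q0 * (v0 ^ 2 + w)) • Q + v0 • V := by
    rw [hπ]; funext i; fin_cases i
    · simp [cross_apply, Pi.sub_apply, Pi.smul_apply, smul_eq_mul, Pi.add_apply]
      linear_combination (-(q0 * V 0) - v0 * Q 0) * hQVc + (v0 * V 0) * hQQc + (q0 * Q 0) * hwc
    · simp [cross_apply, Pi.sub_apply, Pi.smul_apply, smul_eq_mul, Pi.add_apply]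
      linear_combination (-(q0 * V 1) - v0 * Q 1) * hQVc + (v0 * V 1) * hQQc + (q0 * Q 1) * hwc
    · simp [cross_apply, Pi.sub_apply, Pi.smul_apply, smul_eq_mul, Pi.add_apply]
      linear_combination (-(q0 * V 2) - v0 * Q 2) * hQVc + (v0 * V 2) * hQQc + (q0 * Q 2) * hwc
  -- alpha and beta
  have hα0 : alphaLS γ p 0 = -v0 / (ν * q0) := by
    show (sp p.1 ⬝ᵥ pivec p) / (nuLS γ p * p.1 0) = _
    rw [← hQd, ← hq0d, ← hνd, hQπ]
  have hβ0 : betaLS γ p 0 = r / (γ * q0) * (pivec p ⬝ᵥ pivec p) - 1 := by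
    show nrm3 (sp p.1) / (γ * p.1 0) * (pivec p ⬝ᵥ pivec p) - 1 = _
    rw [← hQd, ← hq0d, ← hrd]
  have hαsp : sp (alphaLS γ p) = r⁻¹ • Q - (-v0 / (γ * q0)) • pivec p := by
    have : sp (alphaLS γ p)
        = (nrm3 (sp p.1))⁻¹ • sp p.1 - ((sp p.1 ⬝ᵥ pivec p) / (γ * p.1 0)) • pivec p := by
      funext i; exact congrFun (rfl) i
    rw [this, ← hQd, ← hq0d, ← hrd, hQπ]
  have hβsp : sp (betaLS γ p) = (r / (ν * q0)) • pivec p := by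
    have : sp (betaLS γ p) = (nrm3 (sp p.1) / (nuLS γ p * p.1 0)) • pivec p := by
      funext i; exact congrFun (rfl) i
    rw [this, ← hQd, ← hq0d, ← hrd, ← hνd]
  -- phase reduction
  have eX : sp (Real.sin φ • alphaLS γ p + Real.cos φ • betaLS γ p)
      = Real.sin φ • sp (alphaLS γ p) + Real.cos φ • sp (betaLS γ p) := rfl
  have eY : sp (nuLS γ p • (-Real.cos φ • alphaLS γ p + Real.sin φ • betaLS γ p))
      = ν • ((-Real.cos φ) • sp (alphaLS γ p) + Real.sin φ • sp (betaLS γ p)) := rfl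
  have eX0 : (Real.sin φ • alphaLS γ p + Real.cos φ • betaLS γ p) 0
      = Real.sin φ * alphaLS γ p 0 + Real.cos φ * betaLS γ p 0 := rfl
  have eY0 : (nuLS γ p • (-Real.cos φ • alphaLS γ p + Real.sin φ • betaLS γ p)) 0
      = ν * ((-Real.cos φ) * alphaLS γ p 0 + Real.sin φ * betaLS γ p 0) := rfl
  refine ⟨?_, ?_, ?_⟩
  · rw [eX, eY, cross_rot _ _ _ _ _ (Real.sin_sq_add_cos_sq φ), hαsp, hβsp]
    simp only [map_sub, _root_.map_smul, LinearMap.sub_apply, LinearMap.smul_apply,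
      cross_self, smul_zero, sub_zero, hQxπ]
    rw [mu, ← hQd, ← hVd]
    match_scalars
    field_simp
  · rw [eX0, eY0, eX, eY, rot_pair _ _ _ _ _ _ _ (Real.sin_sq_add_cos_sq φ),
      hα0, hβ0, hαsp, hβsp, hPi2, hπx, hπ]
    match_scalars
    · field_simp
      rw [← hνs] at C1 ⊢
      linear_combination (-(v0*s*ν^2)) * C1
    · field_simp
      rw [← hνs] at C1 ⊢
      linear_combination (ν^2*s*v0^2*r) * C1 + (-(s*ν^2*q0*(ν*s)*v0^2*r)) * h1
  · rw [rl, mu, ← hQd, ← hVd, ← hrd]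
    have hsinv : (s : ℝ)⁻¹ = ν / γ := by
      rw [hν]; field_simp
    rw [hsinv]
    module

end
end

section
/- Let (q(t),v(t)) be a solution of the Kepler equations on S³ lying in TS³ with 0 < q0(t) < 1 and 𝐪(t) ≠ 0, and set (𝐐(t),𝐕(t)) = Ψ(q(t),v(t)) = (𝐪/q0, 𝛑). Then d𝐐/dt = 𝐕/q0² and d𝐕/dt = −γ𝐐/(q0²|𝐐|³); i.e., the gnomonic map Ψ maps the Kepler vector field X_H on the upper hemisphere of S³ to (1/q0²) times the Euclidean Kepler vector field X_{H_K}, so the two vector fields are C^∞-equivalent with time reparametrization τ(t) = ∫_{t0}^{t} ds/q0(s)². -/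
open Matrix Real

noncomputable section

/-- The gnomonic map `Ψ(q,v) = (𝐐,𝐕) = (𝐪/q₀, 𝛑)`. -/
def Psi (p : (Fin 4 → ℝ) × (Fin 4 → ℝ)) : (Fin 3 → ℝ) × (Fin 3 → ℝ) :=
  ((p.1 0)⁻¹ • sp p.1, pivec p)

/-- The Euclidean Kepler Hamiltonian `H_K(𝐐,𝐕) = ½ 𝐕·𝐕 - γ/|𝐐|`. -/
def HK (γ : ℝ) (QV : (Fin 3 → ℝ) × (Fin 3 → ℝ)) : ℝ :=
  (1 / 2) * (QV.2 ⬝ᵥ QV.2) - γ / nrm3 QV.1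

theorem gnomonic_map_conjugates_up_to_time_rescaling (γ : ℝ) (hγ : 0 < γ) (I : Set ℝ) (hI : Convex ℝ I)
    (q v : ℝ → Fin 4 → ℝ)
    (hq : ∀ t ∈ I, HasDerivAt q (v t) t)
    (hv : ∀ t ∈ I, HasDerivAt v (keplerRHS γ (q t) (v t)) t)
    (hTS : ∀ t ∈ I, (q t, v t) ∈ TS3)
    (hq0 : ∀ t ∈ I, 0 < q t 0 ∧ q t 0 < 1)
    (hqnz : ∀ t ∈ I, sp (q t) ≠ 0) :
    ∀ t ∈ I,
      HasDerivAt (fun s => (Psi (q s, v s)).1) ((1 / q t 0 ^ 2) • (Psi (q t, v t)).2) t ∧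
      HasDerivAt (fun s => (Psi (q s, v s)).2)
        (-(γ / (q t 0 ^ 2 * nrm3 ((Psi (q t, v t)).1) ^ 3)) • (Psi (q t, v t)).1) t := by
  intro t ht
  obtain ⟨h0, h1⟩ := hq0 t ht
  have hq0ne : q t 0 ≠ 0 := ne_of_gt h0
  have hbp : (0:ℝ) < 1 - q t 0 ^ 2 := by nlinarith
  have hqc : ∀ j, HasDerivAt (fun s => q s j) (v t j) t :=
    fun j => hasDerivAt_pi.mp (hq t ht) j
  have hvc : ∀ j, HasDerivAt (fun s => v s j) (keplerRHS γ (q t) (v t) j) t :=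
    fun j => hasDerivAt_pi.mp (hv t ht) j
  have hqq : sp (q t) ⬝ᵥ sp (q t) = 1 - q t 0 ^ 2 := by
    have h := (hTS t ht).1
    simp [dotProduct, Fin.sum_univ_four] at h
    have h2 : ((2:Fin 3)).succ = 3 := by decide
    simp [sp, dotProduct, Fin.sum_univ_three, Fin.succ_zero_eq_one, Fin.succ_one_eq_two, h2]
    nlinarith [h]
  have hrpow_pos : (0:ℝ) < (1 - q t 0 ^ 2) ^ ((3:ℝ)/2) := Real.rpow_pos_of_pos hbp _
  have hnrm : nrm3 ((q t 0)⁻¹ • sp (q t)) ^ 3 = (1 - q t 0 ^ 2) ^ ((3:ℝ)/2) / q t 0 ^ 3 := by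
    have hdot : ((q t 0)⁻¹ • sp (q t)) ⬝ᵥ ((q t 0)⁻¹ • sp (q t))
        = (1 - q t 0 ^ 2) / q t 0 ^ 2 := by
      simp only [smul_dotProduct, dotProduct_smul, smul_eq_mul, hqq]
      field_simp
    have hsq : nrm3 ((q t 0)⁻¹ • sp (q t)) = Real.sqrt (1 - q t 0 ^ 2) / q t 0 := by
      rw [nrm3, hdot, Real.sqrt_div hbp.le, Real.sqrt_sq h0.le]
    rw [hsq, div_pow]
    congr 1
    have : Real.sqrt (1 - q t 0 ^ 2) ^ 3
        = (1 - q t 0 ^ 2) * Real.sqrt (1 - q t 0 ^ 2) := by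
      rw [pow_succ, Real.sq_sqrt hbp.le]
    rw [this, show ((3:ℝ)/2) = 1 + 1/2 by norm_num, Real.rpow_add hbp, Real.rpow_one,
      ← Real.sqrt_eq_rpow]
  constructor
  · rw [hasDerivAt_pi]
    intro i
    have hcomp : (fun s => (Psi (q s, v s)).1 i) = fun s => (q s 0)⁻¹ * q s i.succ := by
      funext s; simp [Psi, sp]
    rw [hcomp]
    have hd := ((hqc 0).inv hq0ne).mul (hqc i.succ)
    convert hd using 1
    · rfl
    · rfl
    simp [Psi, pivec, sp]
    field_simp
    ring
  · rw [hasDerivAt_pi]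
    intro i
    have hcomp : (fun s => (Psi (q s, v s)).2 i)
        = fun s => q s 0 * v s i.succ - v s 0 * q s i.succ := by
      funext s; simp [Psi, pivec, sp]
    rw [hcomp]
    have hd := ((hqc 0).mul (hvc i.succ)).sub ((hvc 0).mul (hqc i.succ))
    convert hd using 1
    · rfl
    have he0 : e0 i.succ = 0 := by simp [e0, Fin.succ_ne_zero]
    have he00 : e0 (0 : Fin 4) = 1 := by simp [e0]
    simp only [Psi, keplerRHS, Pi.sub_apply, Pi.smul_apply, smul_eq_mul, sp, he0, he00]
    rw [hnrm]
    field_simp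
    ring

end
end

section
/- The gnomonic map Ψ intertwines E with the Euclidean Kepler Hamiltonian and the map J with the Euclidean momentum map: for (q,v) ∈ TS³ with q0 > 0 and 𝐪 ≠ 0, writing (𝐐,𝐕) = Ψ(q,v) = (𝐪/q0, 𝛑), one has (i) H_K(𝐐,𝐕) = ½𝛑·𝛑 − γq0/|𝐪| = E(q,v), and (ii) if moreover E < 0, then 𝐐×𝐕 = 𝛍 and −(γ/√(−2H_K))((1/γ)𝐕×(𝐐×𝐕) − 𝐐/|𝐐|) = 𝐞̃, i.e. Ψ*J_K = J = (𝛍, 𝐞̃). -/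
open Matrix Real

noncomputable section

lemma cross0 (a b : Fin 3 → ℝ) : crossProduct a b 0 = a 1 * b 2 - a 2 * b 1 := by
  simp [crossProduct]
lemma cross1 (a b : Fin 3 → ℝ) : crossProduct a b 1 = a 2 * b 0 - a 0 * b 2 := by
  simp [crossProduct]
lemma cross2 (a b : Fin 3 → ℝ) : crossProduct a b 2 = a 0 * b 1 - a 1 * b 0 := by
  simp [crossProduct]

theorem gnomonic_map_intertwines (γ : ℝ) (hγ : 0 < γ)
    (p : (Fin 4 → ℝ) × (Fin 4 → ℝ)) (hp : p ∈ TS3) (hq0 : 0 < p.1 0) (hqnz : sp p.1 ≠ 0) :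
    HK γ (Psi p) = (1 / 2) * (pivec p ⬝ᵥ pivec p) - γ * p.1 0 / nrm3 (sp p.1) ∧
    HK γ (Psi p) = Een γ p ∧
    (Een γ p < 0 →
      crossProduct (Psi p).1 (Psi p).2 = mu p ∧
      -(γ / Real.sqrt (-2 * HK γ (Psi p))) •
          (γ⁻¹ • crossProduct (Psi p).2 (crossProduct (Psi p).1 (Psi p).2) -
            (nrm3 (Psi p).1)⁻¹ • (Psi p).1) =
        -(nuLS γ p / γ) • rl γ p) := by
  obtain ⟨hq, hqv⟩ := hp
  have hq0' : p.1 0 ≠ 0 := ne_of_gt hq0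
  have hγ' : γ ≠ 0 := ne_of_gt hγ
  have hq4 := hq; have hqv4 := hqv
  rw [dotProduct, Fin.sum_univ_four] at hq4 hqv4
  have hdd : 0 < sp p.1 ⬝ᵥ sp p.1 := by
    obtain ⟨i, hi⟩ := Function.ne_iff.mp hqnz
    have h0 : (0:ℝ) < sp p.1 i * sp p.1 i := mul_self_pos.mpr (by simpa using hi)
    calc (0:ℝ) < sp p.1 i * sp p.1 i := h0
      _ ≤ sp p.1 ⬝ᵥ sp p.1 := by
          rw [dotProduct]
          exact Finset.single_le_sum (f := fun j => sp p.1 j * sp p.1 j)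
            (fun j _ => mul_self_nonneg _) (Finset.mem_univ i)
  set a := nrm3 (sp p.1) with ha_def
  have ha : 0 < a := Real.sqrt_pos.mpr hdd
  have ha' : a ≠ 0 := ne_of_gt ha
  have ha2 : a * a = sp p.1 ⬝ᵥ sp p.1 := Real.mul_self_sqrt hdd.le
  have ha2' : a * a = p.1 1 * p.1 1 + p.1 2 * p.1 2 + p.1 3 * p.1 3 := by
    rw [ha2, dotProduct, Fin.sum_univ_three, sp0, sp1, sp2]
  have hnQ : nrm3 (Psi p).1 = a / p.1 0 := by
    have hsm : (Psi p).1 ⬝ᵥ (Psi p).1 = ((p.1 0)⁻¹ * a) * ((p.1 0)⁻¹ * a) := by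
      simp only [Psi, dotProduct, Fin.sum_univ_three, Pi.smul_apply, smul_eq_mul,
        sp0, sp1, sp2]
      linear_combination (-((p.1 0)⁻¹ * (p.1 0)⁻¹)) * ha2'
    have hpos : 0 ≤ (p.1 0)⁻¹ * a := by positivity
    rw [nrm3, hsm, Real.sqrt_mul_self hpos, inv_mul_eq_div]
  have h1 : HK γ (Psi p) = (1 / 2) * (pivec p ⬝ᵥ pivec p) - γ * p.1 0 / a := by
    rw [HK, hnQ, div_div_eq_mul_div]
    rfl
  have hsq : Real.sqrt (1 - p.1 0 ^ 2) = a := by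
    have h1q : 1 - p.1 0 ^ 2 = a * a := by linear_combination (-1) * hq4 + (-1) * ha2'
    rw [h1q, Real.sqrt_mul_self ha.le]
  have key : pivec p ⬝ᵥ pivec p + mu p ⬝ᵥ mu p = p.2 ⬝ᵥ p.2 := by
    simp only [pivec, mu, dotProduct, Fin.sum_univ_three, Fin.sum_univ_four,
      Pi.sub_apply, Pi.smul_apply, smul_eq_mul, cross0, cross1, cross2, sp0, sp1, sp2]
    linear_combination (p.2 0 * p.2 0 + p.2 1 * p.2 1 + p.2 2 * p.2 2 + p.2 3 * p.2 3) * hq4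
      - (p.1 0 * p.2 0 + p.1 1 * p.2 1 + p.1 2 * p.2 2 + p.1 3 * p.2 3) * hqv4
  have h2 : HK γ (Psi p) = Een γ p := by
    rw [h1, Een, Hham, hsq]
    have hpp : (pivec p ⬝ᵥ pivec p) = p.2 ⬝ᵥ p.2 - mu p ⬝ᵥ mu p := by linarith [key]
    rw [hpp]; ring
  refine ⟨h1, h2, fun hE => ?_⟩
  have hcross : crossProduct (Psi p).1 (Psi p).2 = mu p := by
    funext i
    fin_cases i <;>
      simp only [Fin.isValue, Fin.zero_eta, Fin.mk_one, show (⟨2, by norm_num⟩ : Fin 3) = 2 from rfl,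
        Psi, mu, pivec, cross0, cross1, cross2, Pi.smul_apply, Pi.sub_apply, smul_eq_mul] <;>
      field_simp <;> ring
  refine ⟨hcross, ?_⟩
  have hs : 0 < Real.sqrt (-2 * Een γ p) := Real.sqrt_pos.mpr (by linarith)
  have hs' : Real.sqrt (-2 * Een γ p) ≠ 0 := ne_of_gt hs
  rw [hcross, h2, hnQ]
  funext i
  have hk : (a / p.1 0)⁻¹ * (p.1 0)⁻¹ = a⁻¹ := by field_simp
  simp only [nuLS, rl, Psi, ← ha_def, Pi.smul_apply, Pi.sub_apply, Pi.neg_apply, smul_eq_mul]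
  rw [← mul_assoc, hk]
  field_simp

end
end

section
/- The Ligon–Schaaf map for the Kepler problem on S³ factors through the gnomonic map: for every (q,v) ∈ TS³ with q0 > 0, 𝐪 ≠ 0 and E < 0, one has Φ_c(Ψ(q,v)) = Φ(q,v), where Φ is the spherical Ligon–Schaaf map, Φ_c is the Euclidean Ligon–Schaaf map, and Ψ is the gnomonic map. -/
open Matrix Real

noncomputable section

/-- `ν_c = γ/√(-2 H_K)` for the Euclidean Ligon–Schaaf map. -/
def nuc (γ : ℝ) (QV : (Fin 3 → ℝ) × (Fin 3 → ℝ)) : ℝ := γ / Real.sqrt (-2 * HK γ QV)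

/-- The vector `α_c` of the Euclidean Ligon–Schaaf map. -/
def alphac (γ : ℝ) (QV : (Fin 3 → ℝ) × (Fin 3 → ℝ)) : Fin 4 → ℝ :=
  Fin.cons ((QV.2 ⬝ᵥ QV.1) / nuc γ QV)
    ((nrm3 QV.1)⁻¹ • QV.1 - ((QV.2 ⬝ᵥ QV.1) / γ) • QV.2)

/-- The vector `β_c` of the Euclidean Ligon–Schaaf map. -/
def betac (γ : ℝ) (QV : (Fin 3 → ℝ) × (Fin 3 → ℝ)) : Fin 4 → ℝ :=
  Fin.cons (nrm3 QV.1 / γ * (QV.2 ⬝ᵥ QV.2) - 1) ((nrm3 QV.1 / nuc γ QV) • QV.2)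

/-- The phase `φ_c = α_{c,0}` of the Euclidean Ligon–Schaaf map. -/
def phicLS (γ : ℝ) (QV : (Fin 3 → ℝ) × (Fin 3 → ℝ)) : ℝ := (QV.2 ⬝ᵥ QV.1) / nuc γ QV

/-- The Euclidean Ligon–Schaaf map `Φ_c`. -/
def Phic (γ : ℝ) (QV : (Fin 3 → ℝ) × (Fin 3 → ℝ)) : (Fin 4 → ℝ) × (Fin 4 → ℝ) :=
  (Real.sin (phicLS γ QV) • alphac γ QV + Real.cos (phicLS γ QV) • betac γ QV,
   nuc γ QV • (-Real.cos (phicLS γ QV) • alphac γ QV + Real.sin (phicLS γ QV) • betac γ QV))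

theorem LS_map_factors_through_gnomonic (γ : ℝ) (hγ : 0 < γ)
    (p : (Fin 4 → ℝ) × (Fin 4 → ℝ)) (hp : p ∈ TS3) (hq0 : 0 < p.1 0)
    (hqnz : sp p.1 ≠ 0) (hE : Een γ p < 0) :
    Phic γ (Psi p) = PhiLS γ p := by
  obtain ⟨h1, h2⟩ := hp
  have hq0' : p.1 0 ≠ 0 := ne_of_gt hq0
  have hnn : (0:ℝ) ≤ sp p.1 ⬝ᵥ sp p.1 :=
    Finset.sum_nonneg fun i _ => mul_self_nonneg _
  have hne : sp p.1 ⬝ᵥ sp p.1 ≠ 0 := by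
    intro h
    exact hqnz ((dotProduct_self_eq_zero).mp h)
  have hapos : 0 < nrm3 (sp p.1) := Real.sqrt_pos.mpr (lt_of_le_of_ne hnn (Ne.symm hne))
  have ha' : nrm3 (sp p.1) ≠ 0 := ne_of_gt hapos
  have hs0 : (Fin.succ 0 : Fin 4) = 1 := rfl
  have hs1 : (Fin.succ 1 : Fin 4) = 2 := rfl
  have hs2 : (Fin.succ 2 : Fin 4) = 3 := rfl
  have hqq : sp p.1 ⬝ᵥ sp p.1 = 1 - p.1 0 ^ 2 := by
    have h1' := h1
    simp [dotProduct, Fin.sum_univ_four] at h1'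
    simp [sp, dotProduct, Fin.sum_univ_three, hs0, hs1, hs2]
    linarith [h1']
  have hsqrt : Real.sqrt (1 - p.1 0 ^ 2) = nrm3 (sp p.1) := by
    rw [nrm3, hqq]
  have hstep : pivec p ⬝ᵥ pivec p + mu p ⬝ᵥ mu p = p.2 ⬝ᵥ p.2 := by
    have h1' := h1
    have h2' := h2
    simp [dotProduct, Fin.sum_univ_four] at h1' h2'
    have h3 : p.2 ⬝ᵥ p.2 = p.2 0 ^ 2 + p.2 1 ^ 2 + p.2 2 ^ 2 + p.2 3 ^ 2 := by
      simp [dotProduct, Fin.sum_univ_four]; ring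
    rw [h3]
    simp [pivec, mu, sp, cross_apply, dotProduct, Fin.sum_univ_three, hs0, hs1, hs2]
    linear_combination (p.2 0 ^ 2 + p.2 1 ^ 2 + p.2 2 ^ 2 + p.2 3 ^ 2) * h1' -
      (p.1 0 * p.2 0 + p.1 1 * p.2 1 + p.1 2 * p.2 2 + p.1 3 * p.2 3) * h2'
  have hPsi1 : nrm3 (Psi p).1 = nrm3 (sp p.1) / p.1 0 := by
    have hd : (Psi p).1 ⬝ᵥ (Psi p).1 = ((p.1 0)⁻¹)^2 * (sp p.1 ⬝ᵥ sp p.1) := by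
      simp [Psi, smul_dotProduct, dotProduct_smul, smul_eq_mul]
      ring
    rw [show nrm3 (Psi p).1 = Real.sqrt ((Psi p).1 ⬝ᵥ (Psi p).1) from rfl, hd,
      Real.sqrt_mul (sq_nonneg _), Real.sqrt_sq (inv_nonneg.mpr hq0.le)]
    rw [nrm3, div_eq_inv_mul]
  have hHK : HK γ (Psi p) = Een γ p := by
    rw [HK, Een, Hham, hPsi1, hsqrt]
    have hg : γ / (nrm3 (sp p.1) / p.1 0) = γ * p.1 0 / nrm3 (sp p.1) := by
      field_simp
    rw [show (Psi p).2 = pivec p from rfl, hg]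
    linear_combination (1/2 : ℝ) * hstep
  have hnu : nuc γ (Psi p) = nuLS γ p := by rw [nuc, nuLS, hHK]
  have hdot : (Psi p).2 ⬝ᵥ (Psi p).1 = (sp p.1 ⬝ᵥ pivec p) / p.1 0 := by
    rw [show (Psi p).1 = (p.1 0)⁻¹ • sp p.1 from rfl,
      show (Psi p).2 = pivec p from rfl, dotProduct_smul, dotProduct_comm,
      smul_eq_mul, div_eq_inv_mul]
  have hphi : phicLS γ (Psi p) = phiLS γ p := by
    rw [phicLS, phiLS, hdot, hnu, div_div, mul_comm]
  have e1 : (nrm3 (sp p.1) / p.1 0)⁻¹ * (p.1 0)⁻¹ = (nrm3 (sp p.1))⁻¹ := by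
    field_simp
  have e2 : sp p.1 ⬝ᵥ pivec p / p.1 0 / γ = sp p.1 ⬝ᵥ pivec p / (γ * p.1 0) := by
    rw [div_div, mul_comm]
  have halpha : alphac γ (Psi p) = alphaLS γ p := by
    rw [alphac, alphaLS, hdot, hnu, hPsi1,
      show (Psi p).1 = (p.1 0)⁻¹ • sp p.1 from rfl,
      show (Psi p).2 = pivec p from rfl, smul_smul, e1, e2, div_div, mul_comm (nuLS γ p) (p.1 0)]
  have hbeta : betac γ (Psi p) = betaLS γ p := by
    rw [betac, betaLS, hnu, hPsi1, show (Psi p).2 = pivec p from rfl,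
      div_div, div_div, mul_comm (p.1 0) γ, mul_comm (p.1 0) (nuLS γ p)]
  rw [Phic, PhiLS, hphi, halpha, hbeta, hnu]

end
end

section
/- The gnomonic map Ψ is not symplectic: there exist a point (q,v) ∈ TS³ with q0 > 0 and tangent vectors u, w ∈ ℝ⁴×ℝ⁴ tangent to TS³ at (q,v) (i.e., writing u = (u_q,u_v), w = (w_q,w_v): ⟨q,u_q⟩ = 0, ⟨q,u_v⟩ + ⟨v,u_q⟩ = 0, and similarly for w) such that ω₃(DΨ_{(q,v)}(u), DΨ_{(q,v)}(w)) ≠ ω₄(u,w), where DΨ is the Fréchet derivative of Ψ, ω₄((a,b),(a',b')) = ⟨a,b'⟩ − ⟨a',b⟩ is the standard symplectic form on ℝ⁴×ℝ⁴, and ω₃((a,b),(a',b')) = a·b' − a'·b is the standard symplectic form on ℝ³×ℝ³. -/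
open Matrix Real

noncomputable section

abbrev E4 := (Fin 4 → ℝ) × (Fin 4 → ℝ)

def Aco (j : Fin 4) : E4 →L[ℝ] ℝ :=
  (ContinuousLinearMap.proj j).comp (ContinuousLinearMap.fst ℝ (Fin 4 → ℝ) (Fin 4 → ℝ))
def Bco (j : Fin 4) : E4 →L[ℝ] ℝ :=
  (ContinuousLinearMap.proj j).comp (ContinuousLinearMap.snd ℝ (Fin 4 → ℝ) (Fin 4 → ℝ))

def Lder (p : E4) : E4 →L[ℝ] (Fin 3 → ℝ) × (Fin 3 → ℝ) :=
  (ContinuousLinearMap.pi fun i =>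
      (p.1 0)⁻¹ • Aco i.succ + p.1 i.succ • ((-(p.1 0 ^ 2)⁻¹) • Aco 0)).prod
  (ContinuousLinearMap.pi fun i =>
      (p.1 0 • Bco i.succ + p.2 i.succ • Aco 0) -
      (p.2 0 • Aco i.succ + p.1 i.succ • Bco 0))

lemma hA (j : Fin 4) (p : E4) : HasFDerivAt (fun p : E4 => p.1 j) (Aco j) p :=
  (Aco j).hasFDerivAt

lemma hB (j : Fin 4) (p : E4) : HasFDerivAt (fun p : E4 => p.2 j) (Bco j) p :=
  (Bco j).hasFDerivAt

lemma psi_hasFDerivAt (p : E4) (hp : p.1 0 ≠ 0) : HasFDerivAt Psi (Lder p) p := by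
  have hPsi : Psi = fun p : E4 =>
      ((fun i : Fin 3 => (p.1 0)⁻¹ * p.1 i.succ),
       (fun i : Fin 3 => p.1 0 * p.2 i.succ - p.2 0 * p.1 i.succ)) := by
    funext p
    simp only [Psi, pivec, sp, Prod.mk.injEq]
    constructor <;> funext i <;> simp [sp]
  rw [hPsi]
  have hinv : HasFDerivAt (fun p : E4 => (p.1 0)⁻¹) ((-(p.1 0 ^ 2)⁻¹) • Aco 0) p := by
    have h := (hasFDerivAt_inv' hp).comp p (hA 0 p)
    refine h.congr_fderiv (ContinuousLinearMap.ext fun u => ?_)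
    simp [ContinuousLinearMap.mulLeftRight_apply, Aco]
    rw [pow_two, mul_inv]
    ring
  exact (hasFDerivAt_pi'' fun i => hinv.mul (hA i.succ p)).prodMk
        (hasFDerivAt_pi'' fun i => ((hA 0 p).mul (hB i.succ p)).sub ((hB 0 p).mul (hA i.succ p)))

def qpt : Fin 4 → ℝ := ![3/5, 4/5, 0, 0]
def tvec : Fin 4 → ℝ := ![-4/5, 3/5, 0, 0]

theorem gnomonic_map_not_symplectic :
    ∃ (p u w : (Fin 4 → ℝ) × (Fin 4 → ℝ)),
      p ∈ TS3 ∧ 0 < p.1 0 ∧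
      p.1 ⬝ᵥ u.1 = 0 ∧ p.1 ⬝ᵥ u.2 + p.2 ⬝ᵥ u.1 = 0 ∧
      p.1 ⬝ᵥ w.1 = 0 ∧ p.1 ⬝ᵥ w.2 + p.2 ⬝ᵥ w.1 = 0 ∧
      (fderiv ℝ Psi p u).1 ⬝ᵥ (fderiv ℝ Psi p w).2 -
          (fderiv ℝ Psi p w).1 ⬝ᵥ (fderiv ℝ Psi p u).2 ≠
        u.1 ⬝ᵥ w.2 - w.1 ⬝ᵥ u.2 := by
  refine ⟨(qpt, 0), (tvec, 0), (0, tvec), ?_, ?_, ?_, ?_, ?_, ?_, ?_⟩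
  · constructor <;> norm_num [qpt, dotProduct, Fin.sum_univ_four, Matrix.cons_val_two, Matrix.cons_val_three]
  · norm_num [qpt]
  · norm_num [qpt, tvec, dotProduct, Fin.sum_univ_four, Matrix.cons_val_two, Matrix.cons_val_three]
  · norm_num [qpt, tvec, dotProduct, Fin.sum_univ_four]
  · norm_num [qpt, tvec, dotProduct, Fin.sum_univ_four]
  · norm_num [qpt, tvec, dotProduct, Fin.sum_univ_four, Matrix.cons_val_two, Matrix.cons_val_three]
  · have hq0 : (qpt, (0 : Fin 4 → ℝ)).1 0 ≠ 0 := by norm_num [qpt]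
    rw [(psi_hasFDerivAt (qpt, 0) hq0).fderiv]
    simp [Lder, Aco, Bco, qpt, tvec, dotProduct, Fin.sum_univ_three, Fin.sum_univ_four]
    norm_num

end
end
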